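/- Measure concentration on product spaces with Hamming distance: for any product probability measure P^n on A^n, any C_n ⊆ A^n with P^n(C_n) > 0, and any D ≥ 0, the probability of the complement of the D-blowup satisfies 1 − P^n([C_n]_D) ≤ e^{−nD²/2} / P^n(C_n). -/

import Mathlib

open Finset

attribute [local instance] Classical.propDecidable

/-- Normalized Hamming distance on `A^n`. -/
noncomputable def hammingN {A : Type*} (n : ℕ) (x y : Fin n → A) : ℝ :=
  (1 / (n : ℝ)) * ∑ i, (if x i ≠ y i then (1 : ℝ) else 0)

/-- The `D`-blowup of `C ⊆ A^n` for the normalized Hamming distance. -/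
noncomputable def blowup {A : Type*} [Fintype A] (n : ℕ)
    (C : Finset (Fin n → A)) (D : ℝ) : Finset (Fin n → A) :=
  Finset.univ.filter (fun x => ∃ y ∈ C, hammingN n x y ≤ D)

/-- Product probability of a subset of `A^n`. -/
noncomputable def prodProb {A : Type*} [Fintype A] (P : A → ℝ) (n : ℕ)
    (C : Finset (Fin n → A)) : ℝ := ∑ x ∈ C, ∏ i, P (x i)

/-! ### Auxiliary lemmas -/

lemma aux5_core_ineq (p : ℝ) (hp0 : 0 ≤ p) (hp1 : p ≤ 1) (s : ℝ) :
    1 - p + p * Real.exp s ≤ Real.exp (p * s + s ^ 2 / 4) := by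
  have hu : ∀ t : ℝ, 0 < 1 - p + p * Real.exp t := by
    intro t
    rcases lt_or_ge p 1 with h | h
    · nlinarith [Real.exp_pos t]
    · have : p = 1 := le_antisymm hp1 h
      simp [this, Real.exp_pos t]
  set F : ℝ → ℝ := fun t => p * t + t ^ 2 / 4 - Real.log (1 - p + p * Real.exp t) with hF
  set F' : ℝ → ℝ := fun t => p + t / 2 - p * Real.exp t / (1 - p + p * Real.exp t) with hF'
  have hderivF : ∀ t, HasDerivAt F (F' t) t := by
    intro t
    have h1 : HasDerivAt (fun t : ℝ => 1 - p + p * Real.exp t) (p * Real.exp t) t := by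
      simpa using ((Real.hasDerivAt_exp t).const_mul p).const_add (1 - p)
    have h2 : HasDerivAt (fun t : ℝ => Real.log (1 - p + p * Real.exp t))
        (p * Real.exp t / (1 - p + p * Real.exp t)) t := h1.log (hu t).ne'
    have h3 : HasDerivAt (fun t : ℝ => p * t + t ^ 2 / 4) (p + t / 2) t := by
      have := ((hasDerivAt_id t).const_mul p).add
        (((hasDerivAt_pow 2 t)).div_const 4)
      exact this.congr_deriv (by norm_num; ring)
    exact h3.sub h2
  have hderivF' : ∀ t, HasDerivAt F'
      (1/2 - p * Real.exp t * (1 - p) / (1 - p + p * Real.exp t) ^ 2) t := by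
    intro t
    have h1 : HasDerivAt (fun t : ℝ => p * Real.exp t) (p * Real.exp t) t :=
      (Real.hasDerivAt_exp t).const_mul p
    have h2 : HasDerivAt (fun t : ℝ => 1 - p + p * Real.exp t) (p * Real.exp t) t := by
      simpa using h1.const_add (1 - p)
    have h3 : HasDerivAt (fun t : ℝ => p * Real.exp t / (1 - p + p * Real.exp t))
        ((p * Real.exp t * (1 - p + p * Real.exp t) - p * Real.exp t * (p * Real.exp t)) /
          (1 - p + p * Real.exp t) ^ 2) t := h1.div h2 (hu t).ne'
    have h4 : HasDerivAt (fun t : ℝ => p + t / 2) (1/2) t := by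
      simpa using (hasDerivAt_id t).div_const (2:ℝ) |>.const_add p
    have := h4.sub h3
    exact this.congr_deriv (by ring)
  have hF''nonneg : ∀ t, 0 ≤ 1/2 - p * Real.exp t * (1 - p) / (1 - p + p * Real.exp t) ^ 2 := by
    intro t
    have h := hu t
    rw [sub_nonneg, div_le_iff₀ (by positivity)]
    nlinarith [Real.exp_pos t, sq_nonneg (1 - p - p * Real.exp t)]
  have hmonoF' : Monotone F' := by
    have hdiff : Differentiable ℝ F' := fun t => (hderivF' t).differentiableAt
    refine monotone_of_deriv_nonneg hdiff ?_
    intro t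
    rw [(hderivF' t).deriv]
    exact hF''nonneg t
  have hF'0 : F' 0 = 0 := by simp [hF']
  have hF0 : F 0 = 0 := by simp [hF]
  have hFnonneg : 0 ≤ F s := by
    have hcont : Continuous F := by
      have : Differentiable ℝ F := fun t => (hderivF t).differentiableAt
      exact this.continuous
    rcases le_total 0 s with h | h
    · have : MonotoneOn F (Set.Ici 0) := by
        refine monotoneOn_of_deriv_nonneg (convex_Ici 0) hcont.continuousOn
          (fun t _ => (hderivF t).differentiableAt.differentiableWithinAt) ?_
        intro t ht
        rw [(hderivF t).deriv]
        have : (0:ℝ) ≤ t := le_of_lt (by simpa using ht)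
        calc (0:ℝ) = F' 0 := hF'0.symm
          _ ≤ F' t := hmonoF' this
      have := this (Set.mem_Ici.mpr le_rfl) (Set.mem_Ici.mpr h) h
      simpa [hF0] using this
    · have : AntitoneOn F (Set.Iic 0) := by
        refine antitoneOn_of_deriv_nonpos (convex_Iic 0) hcont.continuousOn
          (fun t _ => (hderivF t).differentiableAt.differentiableWithinAt) ?_
        intro t ht
        rw [(hderivF t).deriv]
        have ht' : t ≤ (0:ℝ) := le_of_lt (by simpa using ht)
        calc F' t ≤ F' 0 := hmonoF' ht'
          _ = 0 := hF'0
      have := this (Set.mem_Iic.mpr h) (Set.mem_Iic.mpr le_rfl) h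
      simpa [hF0] using this
  have : Real.log (1 - p + p * Real.exp s) ≤ p * s + s ^ 2 / 4 := by
    simp only [hF] at hFnonneg; linarith
  calc 1 - p + p * Real.exp s = Real.exp (Real.log (1 - p + p * Real.exp s)) :=
        (Real.exp_log (hu s)).symm
    _ ≤ Real.exp (p * s + s ^ 2 / 4) := Real.exp_le_exp.mpr this

lemma aux5_dim1_mgf {A : Type*} [Fintype A] [Nonempty A]
    (P : A → ℝ) (hP : ∀ a, 0 ≤ P a) (hPsum : ∑ a, P a = 1)
    (φ : A → ℝ) (hφ : ∀ a b, φ a - φ b ≤ 1) (s : ℝ) :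
    ∑ a, P a * Real.exp (s * φ a) ≤ Real.exp (s * (∑ a, P a * φ a) + s ^ 2 / 4) := by
  obtain ⟨a₀, -, ha₀⟩ := Finset.exists_mem_eq_inf' (Finset.univ_nonempty (α := A)) φ
  set c : ℝ := φ a₀ with hc
  have hlb : ∀ a, c ≤ φ a := fun a => by
    rw [← ha₀]; exact Finset.inf'_le _ (mem_univ a)
  have hub : ∀ a, φ a ≤ c + 1 := fun a => by
    have := hφ a a₀; linarith
  set p : ℝ := ∑ a, P a * (φ a - c) with hp
  have hp0 : 0 ≤ p := Finset.sum_nonneg fun a _ =>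
    mul_nonneg (hP a) (by linarith [hlb a])
  have hp1 : p ≤ 1 := by
    calc p ≤ ∑ a, P a * 1 := Finset.sum_le_sum fun a _ =>
            mul_le_mul_of_nonneg_left (by linarith [hub a]) (hP a)
      _ = 1 := by simp [hPsum]
  have hmean : ∑ a, P a * φ a = c + p := by
    rw [hp]
    rw [show ∑ a, P a * (φ a - c) = (∑ a, P a * φ a) - (∑ a, P a) * c by
      rw [Finset.sum_mul, ← Finset.sum_sub_distrib]; congr 1; ext a; ring]
    rw [hPsum]; ring
  have hptwise : ∀ a, Real.exp (s * φ a) ≤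
      Real.exp (s * c) * (1 - (φ a - c) + (φ a - c) * Real.exp s) := by
    intro a
    set z : ℝ := φ a - c with hz
    have hz0 : 0 ≤ z := by linarith [hlb a]
    have hz1 : z ≤ 1 := by linarith [hub a]
    have hconv := convexOn_exp.2 (Set.mem_univ (0:ℝ)) (Set.mem_univ s)
      (by linarith : (0:ℝ) ≤ 1 - z) hz0 (by ring)
    simp only [smul_eq_mul, mul_zero, zero_add, Real.exp_zero, mul_one] at hconv
    have h1 : Real.exp (s * φ a) = Real.exp (s * c) * Real.exp (z * s) := by
      rw [← Real.exp_add]; congr 1; rw [hz]; ring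
    rw [h1]
    have h2 : Real.exp (z * s) ≤ 1 - z + z * Real.exp s := hconv
    nlinarith [Real.exp_pos (s * c), Real.exp_pos (z * s)]
  calc ∑ a, P a * Real.exp (s * φ a)
      ≤ ∑ a, P a * (Real.exp (s * c) * (1 - (φ a - c) + (φ a - c) * Real.exp s)) :=
        Finset.sum_le_sum fun a _ => mul_le_mul_of_nonneg_left (hptwise a) (hP a)
    _ = Real.exp (s * c) * (1 - p + p * Real.exp s) := by
        rw [show ∑ a, P a * (Real.exp (s * c) * (1 - (φ a - c) + (φ a - c) * Real.exp s))
            = Real.exp (s * c) * ∑ a, (P a - P a * (φ a - c)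
              + (P a * (φ a - c)) * Real.exp s) by
          rw [Finset.mul_sum]; congr 1; ext a; ring]
        rw [Finset.sum_add_distrib, Finset.sum_sub_distrib, ← Finset.sum_mul, ← hp, hPsum]
    _ ≤ Real.exp (s * c) * Real.exp (p * s + s ^ 2 / 4) := by
        have := aux5_core_ineq p hp0 hp1 s
        exact mul_le_mul_of_nonneg_left this (Real.exp_pos _).le
    _ = Real.exp (s * (∑ a, P a * φ a) + s ^ 2 / 4) := by
        rw [← Real.exp_add, hmean]; congr 1; ring

lemma aux5_mass {A : Type*} [Fintype A] [Nonempty A]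
    (P : A → ℝ) (hPsum : ∑ a, P a = 1) (n : ℕ) :
    ∑ x : Fin n → A, ∏ i, P (x i) = 1 := by
  rw [← Fintype.prod_sum]
  simp [hPsum]

lemma aux5_tensor {A : Type*} [Fintype A] [Nonempty A]
    (P : A → ℝ) (hP : ∀ a, 0 ≤ P a) (hPsum : ∑ a, P a = 1) :
    ∀ (n : ℕ) (f : (Fin n → A) → ℝ),
      (∀ (i : Fin n) (x : Fin n → A) (a : A), f x - f (Function.update x i a) ≤ 1) →
      ∀ s : ℝ,
      ∑ x : Fin n → A, (∏ i, P (x i)) * Real.exp (s * f x) ≤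
        Real.exp (s * (∑ x : Fin n → A, (∏ i, P (x i)) * f x) + n * s ^ 2 / 4) := by
  intro n
  induction n with
  | zero =>
      intro f hf s
      rw [Fintype.sum_unique (fun x : Fin 0 → A => (∏ i, P (x i)) * Real.exp (s * f x)),
        Fintype.sum_unique (fun x : Fin 0 → A => (∏ i, P (x i)) * f x)]
      simp
  | succ n ih =>
      intro f hf s
      have hre : ∀ F : (Fin (n+1) → A) → ℝ,
          ∑ x : Fin (n+1) → A, F x = ∑ a : A, ∑ y : Fin n → A, F (Fin.cons a y) := by
        intro F
        calc ∑ x : Fin (n+1) → A, F x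
            = ∑ p : A × (Fin n → A), F (Fin.cons p.1 p.2) :=
              (Fintype.sum_equiv (Fin.consEquiv fun _ => A) _ _ (fun p => rfl)).symm
          _ = ∑ a : A, ∑ y : Fin n → A, F (Fin.cons a y) :=
              Fintype.sum_prod_type (f := fun p : A × (Fin n → A) => F (Fin.cons p.1 p.2))
      have hw : ∀ (a : A) (y : Fin n → A),
          ∏ i : Fin (n+1), P ((Fin.cons a y : Fin (n+1) → A) i) = P a * ∏ i : Fin n, P (y i) := by
        intro a y
        rw [Fin.prod_univ_succ]
        simp
      set m : A → ℝ := fun a => ∑ y : Fin n → A, (∏ i, P (y i)) * f (Fin.cons a y) with hm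
      have hmlip : ∀ a b, m a - m b ≤ 1 := by
        intro a b
        have h : m a - m b = ∑ y : Fin n → A,
            (∏ i, P (y i)) * (f (Fin.cons a y) - f (Fin.cons b y)) := by
          rw [hm, ← Finset.sum_sub_distrib]; congr 1; ext y; ring
        rw [h]
        calc ∑ y : Fin n → A, (∏ i, P (y i)) * (f (Fin.cons a y) - f (Fin.cons b y))
            ≤ ∑ y : Fin n → A, (∏ i, P (y i)) * 1 := by
              refine Finset.sum_le_sum fun y _ => mul_le_mul_of_nonneg_left ?_
                (Finset.prod_nonneg fun i _ => hP _)
              have := hf 0 (Fin.cons a y) b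
              rwa [Fin.update_cons_zero] at this
          _ = 1 := by simp only [mul_one]; exact aux5_mass P hPsum n
      calc ∑ x : Fin (n+1) → A, (∏ i, P (x i)) * Real.exp (s * f x)
          = ∑ a : A, P a * ∑ y : Fin n → A,
              (∏ i, P (y i)) * Real.exp (s * f (Fin.cons a y)) := by
            rw [hre]
            congr 1; ext a
            rw [Finset.mul_sum]
            congr 1; ext y
            rw [hw a y]; ring
        _ ≤ ∑ a : A, P a * Real.exp (s * m a + n * s ^ 2 / 4) := by
            refine Finset.sum_le_sum fun a _ => mul_le_mul_of_nonneg_left ?_ (hP a)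
            refine ih (fun y => f (Fin.cons a y)) ?_ s
            intro i y b
            have := hf i.succ (Fin.cons a y) b
            rwa [← Fin.cons_update] at this
        _ = Real.exp ((n : ℝ) * s ^ 2 / 4) * ∑ a : A, P a * Real.exp (s * m a) := by
            rw [Finset.mul_sum]
            congr 1; ext a
            rw [Real.exp_add]; ring
        _ ≤ Real.exp ((n : ℝ) * s ^ 2 / 4) *
              Real.exp (s * (∑ a : A, P a * m a) + s ^ 2 / 4) := by
            exact mul_le_mul_of_nonneg_left (aux5_dim1_mgf P hP hPsum m hmlip s)
              (Real.exp_pos _).le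
        _ = Real.exp (s * (∑ x : Fin (n+1) → A, (∏ i, P (x i)) * f x)
              + (n + 1 : ℕ) * s ^ 2 / 4) := by
            rw [← Real.exp_add]
            congr 1
            have h : ∑ x : Fin (n+1) → A, (∏ i, P (x i)) * f x = ∑ a : A, P a * m a := by
              rw [hre]
              congr 1; ext a
              rw [hm, Finset.mul_sum]
              congr 1; ext y
              rw [hw a y]; ring
            rw [h]
            push_cast
            ring

noncomputable def aux5_dH {A : Type*} (n : ℕ) (x y : Fin n → A) : ℝ :=
  ∑ i, (if x i ≠ y i then (1 : ℝ) else 0)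

lemma aux5_dH_nonneg {A : Type*} (n : ℕ) (x y : Fin n → A) : 0 ≤ aux5_dH n x y :=
  Finset.sum_nonneg fun i _ => by split <;> norm_num

lemma aux5_dH_self {A : Type*} (n : ℕ) (x : Fin n → A) : aux5_dH n x x = 0 := by
  simp [aux5_dH]

lemma aux5_dH_triangle {A : Type*} (n : ℕ) (x y z : Fin n → A) :
    aux5_dH n x y ≤ aux5_dH n x z + aux5_dH n z y := by
  rw [aux5_dH, aux5_dH, aux5_dH, ← Finset.sum_add_distrib]
  refine Finset.sum_le_sum fun i _ => ?_
  split_ifs with h1 h2 h3 <;> try norm_num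
  all_goals push_neg at *; simp_all

lemma aux5_dH_update {A : Type*} (n : ℕ) (x : Fin n → A) (i : Fin n) (a : A) :
    aux5_dH n x (Function.update x i a) ≤ 1 := by
  rw [aux5_dH]
  calc ∑ j, (if x j ≠ Function.update x i a j then (1:ℝ) else 0)
      ≤ ∑ j, (if j = i then (1:ℝ) else 0) := by
        refine Finset.sum_le_sum fun j _ => ?_
        by_cases hj : j = i
        · simp only [hj, if_pos]; split <;> norm_num
        · rw [Function.update_of_ne hj]
          simp [hj]
    _ = 1 := by simp

lemma aux5_g_lip {A : Type*} {n : ℕ} {C : Finset (Fin n → A)} (hne : C.Nonempty)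
    (i : Fin n) (x : Fin n → A) (a : A) :
    C.inf' hne (fun y => aux5_dH n x y) -
      C.inf' hne (fun y => aux5_dH n (Function.update x i a) y) ≤ 1 := by
  set x' := Function.update x i a with hx'
  obtain ⟨y₀, hy₀C, hy₀⟩ := Finset.exists_mem_eq_inf' hne (fun y => aux5_dH n x' y)
  have h1 : C.inf' hne (fun y => aux5_dH n x y) ≤ aux5_dH n x y₀ :=
    Finset.inf'_le _ hy₀C
  have h2 : aux5_dH n x y₀ ≤ aux5_dH n x x' + aux5_dH n x' y₀ := aux5_dH_triangle n x y₀ x'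
  have h3 : aux5_dH n x x' ≤ 1 := aux5_dH_update n x i a
  rw [hy₀] at *
  linarith

theorem stmt_5 {A : Type*} [Fintype A] [Nonempty A]
    (P : A → ℝ) (hP : ∀ a, 0 ≤ P a) (hPsum : ∑ a, P a = 1)
    (n : ℕ) (hn : 0 < n) (C : Finset (Fin n → A))
    (hC : 0 < prodProb P n C) (D : ℝ) (hD : 0 ≤ D) :
    1 - prodProb P n (blowup n C D) ≤
      Real.exp (-(n : ℝ) * D ^ 2 / 2) / prodProb P n C := by
  have hCne : C.Nonempty := by
    rw [Finset.nonempty_iff_ne_empty]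
    rintro rfl
    simp [prodProb] at hC
  set w : (Fin n → A) → ℝ := fun x => ∏ i, P (x i) with hwdef
  have hwnn : ∀ x, 0 ≤ w x := fun x => Finset.prod_nonneg fun i _ => hP _
  set g : (Fin n → A) → ℝ := fun x => C.inf' hCne (fun y => aux5_dH n x y) with hgdef
  have hg0 : ∀ x ∈ C, g x = 0 := by
    intro x hx
    refine le_antisymm ?_ (Finset.le_inf' hCne _ fun y _ => aux5_dH_nonneg n x y)
    have h := Finset.inf'_le (fun y => aux5_dH n x y) hx
    rw [aux5_dH_self] at h
    exact h
  have hgnn : ∀ x, 0 ≤ g x := fun x =>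
    Finset.le_inf' hCne _ fun y _ => aux5_dH_nonneg n x y
  have hglip : ∀ (i : Fin n) (x : Fin n → A) (a : A),
      g x - g (Function.update x i a) ≤ 1 := fun i x a => aux5_g_lip hCne i x a
  set μ : ℝ := ∑ x, w x * g x with hμdef
  have hμ0 : 0 ≤ μ := Finset.sum_nonneg fun x _ => mul_nonneg (hwnn x) (hgnn x)
  have hnR : (0:ℝ) < n := by exact_mod_cast hn
  have key1 : ∀ s : ℝ, prodProb P n C ≤ Real.exp (s * μ + n * s ^ 2 / 4) := by
    intro s
    have h1 : prodProb P n C = ∑ x ∈ C, w x * Real.exp (s * g x) := by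
      rw [prodProb]
      refine Finset.sum_congr rfl fun x hx => ?_
      rw [hg0 x hx]
      simp
      rfl
    calc prodProb P n C = ∑ x ∈ C, w x * Real.exp (s * g x) := h1
      _ ≤ ∑ x, w x * Real.exp (s * g x) :=
          Finset.sum_le_sum_of_subset_of_nonneg (Finset.subset_univ C)
            (fun x _ _ => mul_nonneg (hwnn x) (Real.exp_pos _).le)
      _ ≤ Real.exp (s * μ + n * s ^ 2 / 4) := aux5_tensor P hP hPsum n g hglip s
  have key2 : ∀ t : ℝ, 0 ≤ t →
      1 - prodProb P n (blowup n C D) ≤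
        Real.exp (-(t * ((n:ℝ) * D)) + t * μ + n * t ^ 2 / 4) := by
    intro t ht
    have hcompl : 1 - prodProb P n (blowup n C D) = ∑ x ∈ (blowup n C D)ᶜ, w x := by
      have hsplit := Finset.sum_add_sum_compl (blowup n C D) w
      have htot : ∑ x, w x = 1 := aux5_mass P hPsum n
      rw [prodProb]
      rw [htot] at hsplit
      linarith
    have hgD : ∀ x ∈ (blowup n C D)ᶜ, (n:ℝ) * D ≤ g x := by
      intro x hx
      rw [Finset.mem_compl, blowup, Finset.mem_filter] at hx
      push_neg at hx
      have hx' := hx (Finset.mem_univ x)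
      obtain ⟨y₀, hy₀C, hy₀⟩ := Finset.exists_mem_eq_inf' hCne (fun y => aux5_dH n x y)
      have hlt : D < hammingN n x y₀ := hx' y₀ hy₀C
      have hgx : g x = aux5_dH n x y₀ := hy₀
      rw [hammingN] at hlt
      rw [hgx, aux5_dH]
      have h2 := mul_lt_mul_of_pos_left hlt hnR
      rw [show (n:ℝ) * (1 / (n:ℝ) * ∑ i, (if x i ≠ y₀ i then (1:ℝ) else 0))
          = ∑ i, (if x i ≠ y₀ i then (1:ℝ) else 0) from by field_simp] at h2
      exact h2.le
    calc 1 - prodProb P n (blowup n C D) = ∑ x ∈ (blowup n C D)ᶜ, w x := hcompl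
      _ ≤ ∑ x ∈ (blowup n C D)ᶜ, w x * Real.exp (t * g x + -(t * ((n:ℝ) * D))) := by
          refine Finset.sum_le_sum fun x hx => ?_
          nth_rewrite 1 [← mul_one (w x)]
          refine mul_le_mul_of_nonneg_left ?_ (hwnn x)
          calc (1:ℝ) = Real.exp 0 := Real.exp_zero.symm
            _ ≤ _ := Real.exp_le_exp.mpr
                (by nlinarith [hgD x hx])
      _ ≤ ∑ x, w x * Real.exp (t * g x + -(t * ((n:ℝ) * D))) :=
          Finset.sum_le_sum_of_subset_of_nonneg (Finset.subset_univ _)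
            (fun x _ _ => mul_nonneg (hwnn x) (Real.exp_pos _).le)
      _ = Real.exp (-(t * ((n:ℝ) * D))) * ∑ x, w x * Real.exp (t * g x) := by
          rw [Finset.mul_sum]
          congr 1; ext x
          rw [Real.exp_add]; ring
      _ ≤ Real.exp (-(t * ((n:ℝ) * D))) * Real.exp (t * μ + n * t ^ 2 / 4) :=
          mul_le_mul_of_nonneg_left (aux5_tensor P hP hPsum n g hglip t)
            (Real.exp_pos _).le
      _ = Real.exp (-(t * ((n:ℝ) * D)) + t * μ + n * t ^ 2 / 4) := by
          rw [← Real.exp_add]; congr 1; ring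
  set a : ℝ := (n:ℝ) * D with hadef
  have ha0 : 0 ≤ a := mul_nonneg hnR.le hD
  have hexp : -(n:ℝ) * D ^ 2 / 2 = -(a ^ 2 / (2 * n)) := by
    rw [hadef]; field_simp
  rw [le_div_iff₀ hC]
  rcases le_or_gt (1 - prodProb P n (blowup n C D)) 0 with hneg | hpos
  · calc (1 - prodProb P n (blowup n C D)) * prodProb P n C ≤ 0 :=
        mul_nonpos_of_nonpos_of_nonneg hneg hC.le
      _ ≤ Real.exp (-(n : ℝ) * D ^ 2 / 2) := (Real.exp_pos _).le
  · rcases le_or_gt μ a with hma | hma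
    · set t : ℝ := 2 * (a - μ) / n with htdef
      have ht0 : 0 ≤ t := div_nonneg (by linarith) hnR.le
      have h1 := key1 (-(2 * μ / n))
      have e1 : (-(2 * μ / n)) * μ + (n:ℝ) * (-(2 * μ / n)) ^ 2 / 4 = -(μ ^ 2 / n) := by
        field_simp; ring
      rw [e1] at h1
      have h2 := key2 t ht0
      have e2 : -(t * a) + t * μ + (n:ℝ) * t ^ 2 / 4 = -((a - μ) ^ 2 / n) := by
        rw [htdef]; field_simp; ring
      rw [e2] at h2
      calc (1 - prodProb P n (blowup n C D)) * prodProb P n C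
          ≤ Real.exp (-((a - μ) ^ 2 / n)) * Real.exp (-(μ ^ 2 / n)) :=
            mul_le_mul h2 h1 hC.le (Real.exp_pos _).le
        _ = Real.exp (-((a - μ) ^ 2 / n) + -(μ ^ 2 / n)) := (Real.exp_add _ _).symm
        _ ≤ Real.exp (-(n:ℝ) * D ^ 2 / 2) := by
            rw [hexp]
            refine Real.exp_le_exp.mpr ?_
            have h4 : a ^ 2 / (2 * n) ≤ ((a - μ) ^ 2 + μ ^ 2) / n := by
              rw [div_le_div_iff₀ (by linarith) hnR]
              nlinarith [sq_nonneg (a - 2 * μ)]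
            have h5 : -((a - μ) ^ 2 / n) + -(μ ^ 2 / n) = -(((a - μ) ^ 2 + μ ^ 2) / n) := by
              ring
            linarith
    · have h1 := key1 (-(2 * μ / n))
      have e1 : (-(2 * μ / n)) * μ + (n:ℝ) * (-(2 * μ / n)) ^ 2 / 4 = -(μ ^ 2 / n) := by
        field_simp; ring
      rw [e1] at h1
      have h2 := key2 0 le_rfl
      have e2 : -(0 * a) + 0 * μ + (n:ℝ) * 0 ^ 2 / 4 = 0 := by ring
      rw [e2, Real.exp_zero] at h2
      calc (1 - prodProb P n (blowup n C D)) * prodProb P n C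
          ≤ 1 * Real.exp (-(μ ^ 2 / n)) := mul_le_mul h2 h1 hC.le zero_le_one
        _ = Real.exp (-(μ ^ 2 / n)) := one_mul _
        _ ≤ Real.exp (-(n:ℝ) * D ^ 2 / 2) := by
            rw [hexp]
            refine Real.exp_le_exp.mpr ?_
            have haμ : a ^ 2 ≤ μ ^ 2 := by nlinarith
            have h4 : a ^ 2 / (2 * n) ≤ μ ^ 2 / n := by
              rw [div_le_div_iff₀ (by linarith) hnR]
              nlinarith [haμ, hnR, sq_nonneg μ, sq_nonneg a]
            linarith
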